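/- Let C be a Lie subalgebra of a Lie algebra L over a field 𝔽 and let a₁, …, aₙ ∈ L. If for each m = 1, …, n the subalgebra ⟨C ∪ {a₁,…,a_{m−1}}⟩ is a Lie ideal of ⟨C ∪ {a₁,…,a_m}⟩ (with the m = 1 case reading: C is an ideal of ⟨C ∪ {a₁}⟩), then for every m ≤ n one has ⟨C ∪ {a₁,…,a_m}⟩ = span_𝔽(C ∪ {a₁,…,a_m}). -/

import Mathlib

universe u v

/-- `C` is an ideal of the Lie subalgebra `S`: `C ≤ S` and `⁅S, C⁆ ⊆ C`. -/
def IsIdealIn {𝔽 : Type u} [Field 𝔽] {L : Type v} [LieRing L] [LieAlgebra 𝔽 L]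
    (C S : LieSubalgebra 𝔽 L) : Prop :=
  C ≤ S ∧ ∀ x ∈ C, ∀ y ∈ S, ⁅y, x⁆ ∈ C

/-- If `C ⊴ ⟨C a₁⟩ ⊴ ⟨C a₁ a₂⟩ ⊴ ⋯ ⊴ ⟨C a₁ ⋯ aₙ⟩` then
`⟨C a₁ ⋯ aₘ⟩ = span_𝔽(C ∪ {a₁, …, aₘ})` for all `m ≤ n`. -/
theorem chain_lieSpan_eq_span
    (𝔽 : Type u) [Field 𝔽] (L : Type v) [LieRing L] [LieAlgebra 𝔽 L]
    (C : LieSubalgebra 𝔽 L) (n : ℕ) (a : ℕ → L)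
    (h : ∀ m < n, IsIdealIn
        (LieSubalgebra.lieSpan 𝔽 L ((C : Set L) ∪ a '' {i | i < m}))
        (LieSubalgebra.lieSpan 𝔽 L ((C : Set L) ∪ a '' {i | i < m + 1}))) :
    ∀ m ≤ n,
      (LieSubalgebra.lieSpan 𝔽 L ((C : Set L) ∪ a '' {i | i < m}) : Set L)
        = (Submodule.span 𝔽 ((C : Set L) ∪ a '' {i | i < m}) : Set L) := by
  intro m hmn
  induction m with
  | zero =>
      have h0 : ({i | i < 0} : Set ℕ) = ∅ := by
        ext i; simp
      rw [h0, Set.image_empty, Set.union_empty]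
      rw [LieSubalgebra.lieSpan_eq]
      have : Submodule.span 𝔽 (C : Set L) = (C : Submodule 𝔽 L) :=
        Submodule.span_eq _
      rw [this]
      rfl
  | succ m ih =>
      have hm : m ≤ n := Nat.le_of_succ_le hmn
      have ihm := ih hm
      have hid := h m (Nat.lt_of_succ_le hmn)
      -- set names
      set S : Set L := (C : Set L) ∪ a '' {i | i < m} with hS
      set T : Set L := (C : Set L) ∪ a '' {i | i < m + 1} with hT
      have hins : T = insert (a m) S := by
        have : ({i | i < m + 1} : Set ℕ) = insert m {i | i < m} := by
          ext i; simp [Nat.lt_succ_iff_lt_or_eq, or_comm]; omega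
        rw [hT, this, Set.image_insert_eq, hS]
        ext x; simp [Set.mem_insert_iff, Set.mem_union, or_assoc]
      have hST : S ⊆ T := by
        rw [hins]; exact Set.subset_insert _ _
      have ham : a m ∈ T := by rw [hins]; exact Set.mem_insert _ _
      -- key: the span of T is closed under bracket
      have hbr : ∀ x ∈ Submodule.span 𝔽 T, ∀ y ∈ Submodule.span 𝔽 T,
          ⁅x, y⁆ ∈ Submodule.span 𝔽 T := by
        have hspanT : (Submodule.span 𝔽 T : Set L)
            = {x | ∃ c : 𝔽, ∃ z ∈ Submodule.span 𝔽 S, x = c • a m + z} := by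
          ext x
          rw [hins]
          simp [Submodule.mem_span_insert]
        -- membership in lieSpan S for elements of span S
        have hmemS : ∀ z ∈ Submodule.span 𝔽 S, z ∈ LieSubalgebra.lieSpan 𝔽 L S := by
          intro z hz
          have : z ∈ (Submodule.span 𝔽 S : Set L) := hz
          rw [← ihm] at this
          exact this
        have hmemT : a m ∈ LieSubalgebra.lieSpan 𝔽 L T :=
          LieSubalgebra.subset_lieSpan ham
        -- bracket of span S elements with a m lands in span S
        have hb1 : ∀ z ∈ Submodule.span 𝔽 S, ⁅a m, z⁆ ∈ Submodule.span 𝔽 S := by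
          intro z hz
          have := hid.2 z (hmemS z hz) (a m) hmemT
          have : ⁅a m, z⁆ ∈ (LieSubalgebra.lieSpan 𝔽 L S : Set L) := this
          rw [ihm] at this
          exact this
        have hb2 : ∀ z w, z ∈ Submodule.span 𝔽 S → w ∈ Submodule.span 𝔽 S →
            ⁅z, w⁆ ∈ Submodule.span 𝔽 S := by
          intro z w hz hw
          have : ⁅z, w⁆ ∈ LieSubalgebra.lieSpan 𝔽 L S :=
            (LieSubalgebra.lieSpan 𝔽 L S).lie_mem (hmemS z hz) (hmemS w hw)
          have : ⁅z, w⁆ ∈ (LieSubalgebra.lieSpan 𝔽 L S : Set L) := this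
          rw [ihm] at this
          exact this
        intro x hx y hy
        have hx' : x ∈ (Submodule.span 𝔽 T : Set L) := hx
        have hy' : y ∈ (Submodule.span 𝔽 T : Set L) := hy
        rw [hspanT] at hx' hy'
        obtain ⟨c, z, hz, rfl⟩ := hx'
        obtain ⟨d, w, hw, rfl⟩ := hy'
        have hSsubT : Submodule.span 𝔽 S ≤ Submodule.span 𝔽 T :=
          Submodule.span_mono hST
        have expand : ⁅c • a m + z, d • a m + w⁆
            = c • ⁅a m, w⁆ - d • ⁅a m, z⁆ + ⁅z, w⁆ := by
          simp only [lie_add, add_lie, smul_lie, lie_smul, lie_self, smul_zero,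
            ← lie_skew (a m) z]
          module
        rw [expand]
        refine Submodule.add_mem _ (Submodule.sub_mem _ ?_ ?_) ?_
        · exact hSsubT (Submodule.smul_mem _ _ (hb1 w hw))
        · exact hSsubT (Submodule.smul_mem _ _ (hb1 z hz))
        · exact hSsubT (hb2 z w hz hw)
      -- build the Lie subalgebra on span T
      let K : LieSubalgebra 𝔽 L :=
        { toSubmodule := Submodule.span 𝔽 T
          lie_mem' := fun {x y} hx hy => hbr x hx y hy }
      have hle : LieSubalgebra.lieSpan 𝔽 L T ≤ K :=
        LieSubalgebra.lieSpan_le.mpr (Submodule.subset_span)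
      apply Set.Subset.antisymm
      · exact hle
      · exact LieSubalgebra.submodule_span_le_lieSpan
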